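/- Squeezing criterion: let Γ be a 2N×2N covariance matrix. Then there exist a matrix S with S σ Sᵀ = σ and S Sᵀ = 𝟙 (a passive symplectic transformation) and an index k with (S Γ Sᵀ)_{kk} < 1 if and only if the smallest eigenvalue of Γ is smaller than one. -/

import Mathlib

open Matrix Polynomial
open ComplexOrder

noncomputable section

/-- The standard symplectic form matrix: block diagonal with 2×2 blocks [[0,1],[-1,0]]. -/
def symplForm (n : ℕ) : Matrix (Fin n) (Fin n) ℝ :=
  Matrix.of fun i j =>
    if (i : ℕ) + 1 = (j : ℕ) ∧ (i : ℕ) % 2 = 0 then 1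
    else if (j : ℕ) + 1 = (i : ℕ) ∧ (j : ℕ) % 2 = 0 then -1 else 0

/-- Membership in the real symplectic group: `S σ Sᵀ = σ`. -/
def IsSymplectic {n : ℕ} (S : Matrix (Fin n) (Fin n) ℝ) : Prop :=
  S * symplForm n * Sᵀ = symplForm n

/-- The Williamson diagonal matrix `diag(a₁,a₁,…,a_N,a_N)`. -/
def WDiag {N : ℕ} (a : Fin N → ℝ) : Matrix (Fin (2 * N)) (Fin (2 * N)) ℝ :=
  Matrix.diagonal fun i => a ⟨(i : ℕ) / 2, by have := i.isLt; omega⟩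

/-- A covariance matrix: real symmetric with `γ + iσ` positive semidefinite. -/
def IsCovMatrix {n : ℕ} (γ : Matrix (Fin n) (Fin n) ℝ) : Prop :=
  γ.IsSymm ∧
    (γ.map (Complex.ofReal) + Complex.I • (symplForm n).map Complex.ofReal).PosSemidef

/-- The block-diagonal direct sum of two square matrices. -/
def dirSum {m n : ℕ} (A : Matrix (Fin m) (Fin m) ℝ) (B : Matrix (Fin n) (Fin n) ℝ) :
    Matrix (Fin (m + n)) (Fin (m + n)) ℝ :=
  Matrix.reindex finSumFinEquiv finSumFinEquiv (Matrix.fromBlocks A 0 0 B)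

/-- Separability of a covariance matrix with respect to the split `A|B`. -/
def IsSepCov (nA nB : ℕ) (γ : Matrix (Fin (nA + nB)) (Fin (nA + nB)) ℝ) : Prop :=
  ∃ (γA : Matrix (Fin nA) (Fin nA) ℝ) (γB : Matrix (Fin nB) (Fin nB) ℝ),
    IsCovMatrix γA ∧ IsCovMatrix γB ∧ (γ - dirSum γA γB).PosSemidef

/-- Squeezing criterion: some passive symplectic transformation produces a diagonal entry
smaller than one iff the smallest eigenvalue of `Γ` is smaller than one. -/
def pe (N : ℕ) : Fin N × Fin 2 ≃ Fin (2 * N) where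
  toFun x := ⟨2 * (x.1 : ℕ) + (x.2 : ℕ), by have := x.1.isLt; have := x.2.isLt; omega⟩
  invFun p := (⟨(p : ℕ) / 2, by have := p.isLt; omega⟩, ⟨(p : ℕ) % 2, by omega⟩)
  left_inv := by
    rintro ⟨⟨j, hj⟩, ⟨a, ha⟩⟩
    simp only [Prod.ext_iff, Fin.ext_iff]
    omega
  right_inv := by
    rintro ⟨p, hp⟩
    simp only [Fin.ext_iff]
    omega

theorem sum2 {M : Type*} [AddCommMonoid M] (N : ℕ) (f : Fin (2*N) → M) :
    ∑ p, f p = ∑ j : Fin N, (f (pe N (j,0)) + f (pe N (j,1))) := by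
  rw [← Equiv.sum_comp (pe N) f, Fintype.sum_prod_type]
  exact Finset.sum_congr rfl fun j _ => by rw [Fin.sum_univ_two]

theorem pe_val (N : ℕ) (j : Fin N) (a : Fin 2) : (pe N (j,a) : ℕ) = 2 * j + a := rfl

theorem symplForm_pe (N : ℕ) (j k : Fin N) (a b : Fin 2) :
    symplForm (2*N) (pe N (j,a)) (pe N (k,b)) =
      if j = k ∧ (a:ℕ) = 0 ∧ (b:ℕ) = 1 then 1
      else if j = k ∧ (a:ℕ) = 1 ∧ (b:ℕ) = 0 then -1 else 0 := by
  show (if _ then _ else _) = _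
  have ha := a.isLt; have hb := b.isLt
  split_ifs <;> simp only [pe_val, Fin.ext_iff] at * <;> first | rfl | omega

theorem triple (N : ℕ) (S T : Matrix (Fin (2*N)) (Fin (2*N)) ℝ) (p q : Fin (2*N)) :
    (S * symplForm (2*N) * Tᵀ) p q =
      ∑ j : Fin N, (S p (pe N (j,0)) * T q (pe N (j,1)) - S p (pe N (j,1)) * T q (pe N (j,0))) := by
  simp only [Matrix.mul_apply, Matrix.transpose_apply, Finset.sum_mul]
  simp only [sum2 N]
  simp only [symplForm_pe, mul_ite, ite_mul, mul_zero, zero_mul, mul_one, mul_neg_one]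
  norm_num [Finset.sum_ite_eq', sub_eq_add_neg]
  exact Finset.sum_congr rfl fun j _ => by ring

open Complex in
theorem exists_row (N : ℕ) (hN : 1 ≤ N) (v : Fin (2*N) → ℝ)
    (hv : ∑ p, v p * v p = 1) :
    ∃ S : Matrix (Fin (2*N)) (Fin (2*N)) ℝ,
      S * symplForm (2*N) * Sᵀ = symplForm (2*N) ∧ S * Sᵀ = 1 ∧ ∃ k, ∀ q, S k q = v q := by
  classical
  rw [sum2 N] at hv
  set i₀ : Fin N := ⟨0, hN⟩ with hi₀
  set u : EuclideanSpace ℂ (Fin N) := WithLp.toLp 2 (fun j => (⟨v (pe N (j,0)), v (pe N (j,1))⟩ : ℂ)) with hu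
  have hu1 : (inner ℂ u u : ℂ) = 1 := by
    rw [PiLp.inner_apply]
    simp only [RCLike.inner_apply, mul_comm, Complex.mul_conj]
    have : ∀ j, (Complex.normSq (u j) : ℂ)
        = ((v (pe N (j,0)) * v (pe N (j,0)) + v (pe N (j,1)) * v (pe N (j,1)) : ℝ) : ℂ) := by
      intro j
      rw [hu]
      norm_num [Complex.normSq_mk]
    rw [Finset.sum_congr rfl fun j _ => this j, ← Complex.ofReal_sum, hv, Complex.ofReal_one]
  have horm : Orthonormal ℂ (({i₀} : Set (Fin N)).restrict (fun _ : Fin N => u)) := by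
    rw [orthonormal_iff_ite]
    rintro ⟨i, hi⟩ ⟨j, hj⟩
    simp only [Set.mem_singleton_iff] at hi hj
    subst hi; subst hj
    rw [if_pos rfl]
    exact hu1
  have hcard : Module.finrank ℂ (EuclideanSpace ℂ (Fin N)) = Fintype.card (Fin N) := by
    simp [finrank_euclideanSpace]
  obtain ⟨b, hb⟩ := horm.exists_orthonormalBasis_extension_of_card_eq hcard
  have hbu : b i₀ = u := hb i₀ rfl
  set ε : Fin (2*N) → ℂ := fun p => if (p:ℕ) % 2 = 0 then 1 else Complex.I with hε
  set w : Fin (2*N) → Fin N → ℂ :=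
    fun p j => ε p * b ⟨(p:ℕ)/2, by have := p.isLt; omega⟩ j with hw
  set S : Matrix (Fin (2*N)) (Fin (2*N)) ℝ := Matrix.of fun p q =>
    if (q:ℕ) % 2 = 0 then (w p ⟨(q:ℕ)/2, by have := q.isLt; omega⟩).re
    else (w p ⟨(q:ℕ)/2, by have := q.isLt; omega⟩).im with hS
  have hmk : ∀ (m : ℕ) (h : m < N) (j : Fin N), (m : ℕ) = (j : ℕ) →
      (⟨m, h⟩ : Fin N) = j := fun m h j hj => Fin.ext hj
  have h00 : ((0 : Fin 2) : ℕ) = 0 := rfl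
  have h11 : ((1 : Fin 2) : ℕ) = 1 := rfl
  have hS0 : ∀ (p : Fin (2*N)) (j : Fin N), S p (pe N (j,0)) = (w p j).re := by
    intro p j
    have hc : ((pe N (j,(0:Fin 2))) : ℕ) % 2 = 0 := by rw [pe_val, h00]; omega
    have hd : ((pe N (j,(0:Fin 2))) : ℕ) / 2 = (j:ℕ) := by rw [pe_val, h00]; omega
    rw [hS]
    simp only [Matrix.of_apply]
    rw [if_pos hc]
    exact congrArg (fun t => (w p t).re) (hmk _ _ _ hd)
  have hS1 : ∀ (p : Fin (2*N)) (j : Fin N), S p (pe N (j,1)) = (w p j).im := by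
    intro p j
    have hc : ¬(((pe N (j,(1:Fin 2))) : ℕ) % 2 = 0) := by rw [pe_val, h11]; omega
    have hd : ((pe N (j,(1:Fin 2))) : ℕ) / 2 = (j:ℕ) := by rw [pe_val, h11]; omega
    rw [hS]
    simp only [Matrix.of_apply]
    rw [if_neg hc]
    exact congrArg (fun t => (w p t).im) (hmk _ _ _ hd)
  have hkey : ∀ p q : Fin (2*N), ∑ j, (starRingEnd ℂ) (w p j) * w q j
      = (starRingEnd ℂ) (ε p) * ε q * (if (p:ℕ)/2 = (q:ℕ)/2 then 1 else 0) := by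
    intro p q
    have hbo := orthonormal_iff_ite.mp b.orthonormal
      ⟨(p:ℕ)/2, by have := p.isLt; omega⟩ ⟨(q:ℕ)/2, by have := q.isLt; omega⟩
    rw [PiLp.inner_apply] at hbo
    simp only [RCLike.inner_apply] at hbo
    calc ∑ j, (starRingEnd ℂ) (w p j) * w q j
        = ((starRingEnd ℂ) (ε p) * ε q) *
          ∑ j, (starRingEnd ℂ) (b ⟨(p:ℕ)/2, by have := p.isLt; omega⟩ j) *
            b ⟨(q:ℕ)/2, by have := q.isLt; omega⟩ j := by
          rw [Finset.mul_sum]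
          refine Finset.sum_congr rfl fun j _ => ?_
          simp only [hw, _root_.map_mul]
          ring
      _ = (starRingEnd ℂ) (ε p) * ε q * (if (p:ℕ)/2 = (q:ℕ)/2 then 1 else 0) := by
          rw [Finset.sum_congr rfl fun j _ => mul_comm ((starRingEnd ℂ) (b ⟨(p:ℕ)/2, by have := p.isLt; omega⟩ j)) _, hbo]
          congr 1
          simp [Fin.ext_iff]
  have hre : ∀ p q : Fin (2*N), (S * Sᵀ) p q = (∑ j, (starRingEnd ℂ) (w p j) * w q j).re := by
    intro p q
    rw [Matrix.mul_apply]
    simp only [Matrix.transpose_apply]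
    rw [sum2 N, Complex.re_sum]
    refine Finset.sum_congr rfl fun j _ => ?_
    rw [hS0, hS0, hS1, hS1]
    simp only [Complex.mul_re, Complex.conj_re, Complex.conj_im]
    ring
  have him : ∀ p q : Fin (2*N), (S * symplForm (2*N) * Sᵀ) p q
      = (∑ j, (starRingEnd ℂ) (w p j) * w q j).im := by
    intro p q
    rw [triple, Complex.im_sum]
    refine Finset.sum_congr rfl fun j _ => ?_
    rw [hS0, hS0, hS1, hS1]
    simp only [Complex.mul_im, Complex.conj_re, Complex.conj_im]
    ring
  have hεε : ∀ p, (starRingEnd ℂ) (ε p) * ε p = 1 := by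
    intro p
    rw [hε]
    by_cases hp : (p:ℕ) % 2 = 0 <;> simp [hp]
  have hOrth : S * Sᵀ = 1 := by
    ext p q
    rw [hre, hkey]
    by_cases h2 : (p:ℕ)/2 = (q:ℕ)/2
    · by_cases hpar : (p:ℕ)%2 = (q:ℕ)%2
      · have hpq : p = q := Fin.ext (by omega)
        subst hpq
        rw [if_pos rfl, mul_one, hεε, Matrix.one_apply_eq]
        exact Complex.one_re
      · have hne : p ≠ q := fun h => hpar (by rw [h])
        rw [if_pos h2, mul_one, Matrix.one_apply_ne hne, hε]
        by_cases hp : (p:ℕ)%2 = 0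
        · simp [hp, show ¬((q:ℕ)%2 = 0) from by omega]
        · simp [hp, show (q:ℕ)%2 = 0 from by omega]
    · have hne : p ≠ q := fun h => h2 (by rw [h])
      rw [if_neg h2, mul_zero, Matrix.one_apply_ne hne]
      exact Complex.zero_re
  have hSymp : S * symplForm (2*N) * Sᵀ = symplForm (2*N) := by
    ext p q
    rw [him, hkey]
    have hσ : symplForm (2*N) p q = if (p:ℕ)+1 = (q:ℕ) ∧ (p:ℕ)%2 = 0 then 1
        else if (q:ℕ)+1 = (p:ℕ) ∧ (q:ℕ)%2 = 0 then -1 else 0 := rfl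
    rw [hσ]
    by_cases h2 : (p:ℕ)/2 = (q:ℕ)/2
    · by_cases hp : (p:ℕ)%2 = 0 <;> by_cases hq : (q:ℕ)%2 = 0
      · have hpq : p = q := Fin.ext (by omega)
        subst hpq
        rw [if_pos rfl, mul_one, hεε, if_neg (by omega), if_neg (by omega)]
        exact Complex.one_im
      · rw [if_pos h2, mul_one, if_pos ⟨by omega, hp⟩, hε]
        simp [hp, hq]
      · rw [if_pos h2, mul_one, if_neg (by omega), if_pos ⟨by omega, hq⟩, hε]
        simp [hp, hq]
      · have hpq : p = q := Fin.ext (by omega)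
        subst hpq
        rw [if_pos rfl, mul_one, hεε, if_neg (by omega), if_neg (by omega)]
        exact Complex.one_im
    · rw [if_neg h2, mul_zero, if_neg (by omega), if_neg (by omega)]
      exact Complex.zero_im
  refine ⟨S, hSymp, hOrth, pe N (i₀, 0), fun q => ?_⟩
  have hk0 : ((pe N (i₀, 0) : Fin (2*N)) : ℕ) = 0 := by rw [pe_val, hi₀]; rfl
  have hwk : ∀ j, w (pe N (i₀, 0)) j = u j := by
    intro j
    have h1 : ε (pe N (i₀, 0)) = 1 := by rw [hε]; exact if_pos (by omega)
    simp only [hw]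
    rw [h1, one_mul, hmk _ _ i₀ (by rw [hk0, hi₀]), hbu]
  show (if _ then _ else _) = _
  by_cases hq : (q:ℕ) % 2 = 0
  · rw [if_pos hq, hwk]
    have : pe N (⟨(q:ℕ)/2, by have := q.isLt; omega⟩, 0) = q := by
      apply Fin.ext; rw [pe_val, h00]; simp only [Fin.val_mk]; omega
    rw [hu]
    show v (pe N (_, 0)) = v q
    rw [this]
  · rw [if_neg hq, hwk]
    have : pe N (⟨(q:ℕ)/2, by have := q.isLt; omega⟩, 1) = q := by
      apply Fin.ext; rw [pe_val, h11]; simp only [Fin.val_mk]; omega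
    rw [hu]
    show v (pe N (_, 1)) = v q
    rw [this]

theorem quad {n : ℕ} (S Γ : Matrix (Fin n) (Fin n) ℝ) (k : Fin n) :
    (S * Γ * Sᵀ) k k = (fun p => S k p) ⬝ᵥ (Γ *ᵥ fun p => S k p) := by
  simp only [Matrix.mul_apply, Matrix.transpose_apply, dotProduct, Matrix.mulVec,
    Finset.sum_mul, Finset.mul_sum]
  rw [Finset.sum_comm]
  exact Finset.sum_congr rfl fun i _ => Finset.sum_congr rfl fun j _ => by ring

theorem squeezing_criterion' (N : ℕ) (hN : 1 ≤ N)
    (Γ : Matrix (Fin (2 * N)) (Fin (2 * N)) ℝ)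
    (hΓherm : Γ.IsHermitian) :
    (∃ S : Matrix (Fin (2 * N)) (Fin (2 * N)) ℝ,
        (S * symplForm (2*N) * Sᵀ = symplForm (2*N)) ∧ S * Sᵀ = 1 ∧ ∃ k, (S * Γ * Sᵀ) k k < 1) ↔
      ∃ k, hΓherm.eigenvalues k < 1 := by
  constructor
  · rintro ⟨S, hsymp, horth, k, hk⟩
    by_contra hcon
    push_neg at hcon
    have spec := hΓherm.spectral_theorem
    set U : Matrix (Fin (2*N)) (Fin (2*N)) ℝ := (hΓherm.eigenvectorUnitary : Matrix (Fin (2*N)) (Fin (2*N)) ℝ) with hU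
    have hUU : U * star U = 1 := (Matrix.mem_unitaryGroup_iff).mp hΓherm.eigenvectorUnitary.2
    have hsub : Γ - 1 = U * (Matrix.diagonal (RCLike.ofReal ∘ hΓherm.eigenvalues) - 1) * star U := by
      rw [Matrix.mul_sub, Matrix.sub_mul, Matrix.mul_one, hUU]; exact congrArg (· - 1) spec
    have hD : (Matrix.diagonal (RCLike.ofReal ∘ hΓherm.eigenvalues) - 1 :
        Matrix (Fin (2*N)) (Fin (2*N)) ℝ).PosSemidef := by
      rw [← Matrix.diagonal_one, Matrix.diagonal_sub]
      refine Matrix.posSemidef_diagonal_iff.mpr fun i => ?_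
      simpa [Function.comp, sub_nonneg] using hcon i
    have hpsd : (Γ - 1).PosSemidef := by
      rw [hsub]
      exact hD.mul_mul_conjTranspose_same U
    have h2 := hpsd.dotProduct_mulVec_nonneg (fun p => S k p)
    rw [Matrix.sub_mulVec, Matrix.one_mulVec, dotProduct_sub] at h2
    have e1 : (fun p => S k p) ⬝ᵥ (Γ *ᵥ fun p => S k p) = (S * Γ * Sᵀ) k k := (quad S Γ k).symm
    have e2 : (fun p => S k p) ⬝ᵥ (fun p => S k p) = 1 := by
      have h1 : (S * Sᵀ) k k = 1 := by rw [horth]; exact Matrix.one_apply_eq k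
      rw [← h1]
      simp [Matrix.mul_apply, dotProduct]
    simp only [star_trivial] at h2
    rw [e1, e2] at h2
    linarith
  · rintro ⟨k, hk⟩
    set v : Fin (2*N) → ℝ := ⇑(hΓherm.eigenvectorBasis k) with hv
    have horm := orthonormal_iff_ite.mp hΓherm.eigenvectorBasis.orthonormal k k
    rw [if_pos rfl, PiLp.inner_apply] at horm
    simp only [RCLike.inner_apply, starRingEnd_apply, star_trivial] at horm
    have heig := hΓherm.mulVec_eigenvectorBasis k
    obtain ⟨S, hsymp, horth, k', hrow⟩ := exists_row N hN v horm
    refine ⟨S, hsymp, horth, k', ?_⟩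
    have hfe : (fun p => S k' p) = v := funext hrow
    rw [quad, hfe, hv, heig, dotProduct_smul]
    have hvv : ⇑(hΓherm.eigenvectorBasis k) ⬝ᵥ ⇑(hΓherm.eigenvectorBasis k) = 1 := horm
    rw [hvv]
    simpa using hk


theorem squeezing_criterion (N : ℕ) (hN : 1 ≤ N)
    (Γ : Matrix (Fin (2 * N)) (Fin (2 * N)) ℝ) (hΓcov : IsCovMatrix Γ)
    (hΓherm : Γ.IsHermitian) :
    (∃ S : Matrix (Fin (2 * N)) (Fin (2 * N)) ℝ,
        IsSymplectic S ∧ S * Sᵀ = 1 ∧ ∃ k, (S * Γ * Sᵀ) k k < 1) ↔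
      ∃ k, hΓherm.eigenvalues k < 1 := by
  exact squeezing_criterion' N hN Γ hΓherm
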